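/- Let γ ≥ 1, 0 < δ ≤ 1, K > 0. There exist ε₁ > 0 and M > 0, depending only on γ, δ, K, such that for every ε ∈ (0, ε₁) and every C¹ function ψ : [0,∞) → (0,∞) with ψ(0) = 1 satisfying ψ'(t) ≥ -K·ψ(t)·(ε^(2γ)·ψ(t)^(2γ) + ψ(t)^(2γ/δ)) for all t ≥ 0, one has ψ(1/ε^δ) ≥ M·ε^(δ²/(2γ)). -/

import Mathlib

open Real Set

set_option maxHeartbeats 1000000 in
theorem stmt_5 (γ δ K : ℝ) (hγ : 1 ≤ γ) (hδ0 : 0 < δ) (hδ1 : δ ≤ 1) (hK : 0 < K) :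
    ∃ ε₁ > 0, ∃ M > 0, ∀ ε, 0 < ε → ε < ε₁ →
      ∀ ψ ψ' : ℝ → ℝ, (∀ t ≥ 0, HasDerivAt ψ (ψ' t) t) →
        (∀ t ≥ 0, 0 < ψ t) → ψ 0 = 1 →
        (∀ t ≥ 0, ψ' t ≥ -K * ψ t * (ε ^ (2 * γ) * (ψ t) ^ (2 * γ) + (ψ t) ^ (2 * γ / δ))) →
        ψ (1 / ε ^ δ) ≥ M * ε ^ (δ ^ 2 / (2 * γ)) := by
  have hγ0 : (0:ℝ) < γ := lt_of_lt_of_le one_pos hγ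
  have h2γ : (0:ℝ) < 2 * γ := by linarith
  set p : ℝ := δ / (2 * γ) with hp
  have hp0 : 0 < p := div_pos hδ0 h2γ
  set c : ℝ := δ / (4 * K * γ + δ) with hc
  have hden : 0 < 4 * K * γ + δ := by nlinarith
  have hc0 : 0 < c := div_pos hδ0 hden
  set q : ℝ := 2 * γ - δ * (1 - δ) with hq
  have hq0 : 0 < q := by nlinarith
  set ε₁ : ℝ := min 1 ((c ^ (1 - δ)) ^ (1 / q)) with hε₁
  have hcpow : 0 < c ^ (1 - δ) := rpow_pos_of_pos hc0 _
  have hε₁0 : 0 < ε₁ := lt_min one_pos (rpow_pos_of_pos hcpow _)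
  refine ⟨ε₁, hε₁0, c ^ p, rpow_pos_of_pos hc0 _, ?_⟩
  intro ε hε0 hεε₁ ψ ψ' hderiv hpos hψ0 hODE
  have hε1 : ε < 1 := lt_of_lt_of_le hεε₁ (min_le_left _ _)
  have hεq : ε ^ q < c ^ (1 - δ) := by
    have h1 : ε ^ q < ((c ^ (1 - δ)) ^ (1 / q)) ^ q :=
      rpow_lt_rpow hε0.le (lt_of_lt_of_le hεε₁ (min_le_right _ _)) hq0
    calc ε ^ q < ((c ^ (1 - δ)) ^ (1 / q)) ^ q := h1
      _ = c ^ (1 - δ) := by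
          rw [← rpow_mul hcpow.le, one_div_mul_cancel hq0.ne', rpow_one]
  set T : ℝ := 1 / ε ^ δ with hT
  have hεδ : 0 < ε ^ δ := rpow_pos_of_pos hε0 _
  have hεδ1 : ε ^ δ ≤ 1 := rpow_le_one hε0.le hε1.le hδ0.le
  have hT0 : 0 < T := by positivity
  have hT1 : 1 ≤ T := by rw [hT]; exact one_le_one_div hεδ hεδ1
  set u : ℝ → ℝ := fun t => 4 * K * γ * t + δ with hu
  set z : ℝ → ℝ := fun t => δ ^ p * u t ^ (-p) with hz
  set zd : ℝ → ℝ := fun t => δ ^ p * (4 * K * γ * (-p) * u t ^ (-p - 1)) with hzd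
  have hut : ∀ t, 0 ≤ t → 0 < u t := by
    intro t ht; simp only [hu]; nlinarith [mul_nonneg (mul_nonneg (mul_nonneg (by norm_num : (0:ℝ) ≤ 4) hK.le) hγ0.le) ht]
  have hzderiv : ∀ t, 0 ≤ t → HasDerivAt z (zd t) t := by
    intro t ht
    have h1 : HasDerivAt u (4 * K * γ) t := by
      have h0 := ((hasDerivAt_id t).const_mul (4 * K * γ)).add_const δ; rw [mul_one] at h0; exact h0
    exact (h1.rpow_const (Or.inl (hut t ht).ne')).const_mul _
  have hwlb : ∀ t, 0 ≤ t → t ≤ T → c * ε ^ δ ≤ δ / u t := by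
    intro t ht1 ht2
    have hut0 := hut t ht1
    have huT : u t ≤ (4 * K * γ + δ) * T := by
      have : u t ≤ 4 * K * γ * T + δ := by
        simp only [hu]; nlinarith [mul_le_mul_of_nonneg_left ht2 (by positivity : (0:ℝ) ≤ 4*K*γ)]
      nlinarith
    have h2 : c * ε ^ δ = δ / ((4 * K * γ + δ) * T) := by
      rw [hc, hT]; field_simp
    rw [h2]
    exact div_le_div_of_nonneg_left hδ0.le hut0 huT
  -- the contact inequality precomputation: ε ^ (2 * γ) < (δ / u x) ^ (1 - δ) for x ∈ [0, T]
  have hkey : ∀ x, 0 ≤ x → x ≤ T → ε ^ (2 * γ) < (δ / u x) ^ (1 - δ) := by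
    intro x hx1 hx2
    have hut0 := hut x hx1
    have hw0 : 0 < δ / u x := div_pos hδ0 hut0
    have h1 : ε ^ (2 * γ) = ε ^ (δ * (1 - δ)) * ε ^ q := by
      rw [← rpow_add hε0]; congr 1; rw [hq]; ring
    have h2 : (c * ε ^ δ) ^ (1 - δ) ≤ (δ / u x) ^ (1 - δ) :=
      rpow_le_rpow (by positivity) (hwlb x hx1 hx2) (by linarith)
    have h3 : (c * ε ^ δ) ^ (1 - δ) = c ^ (1 - δ) * ε ^ (δ * (1 - δ)) := by
      rw [mul_rpow hc0.le hεδ.le, rpow_mul hε0.le]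
    have h4 : ε ^ (δ * (1 - δ)) * ε ^ q < c ^ (1 - δ) * ε ^ (δ * (1 - δ)) := by
      have hεpos : 0 < ε ^ (δ * (1 - δ)) := rpow_pos_of_pos hε0 _
      calc ε ^ (δ * (1 - δ)) * ε ^ q < ε ^ (δ * (1 - δ)) * c ^ (1 - δ) :=
            (mul_lt_mul_iff_right₀ hεpos).2 hεq
        _ = c ^ (1 - δ) * ε ^ (δ * (1 - δ)) := mul_comm _ _
    rw [h1]
    calc ε ^ (δ * (1 - δ)) * ε ^ q < c ^ (1 - δ) * ε ^ (δ * (1 - δ)) := h4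
      _ = (c * ε ^ δ) ^ (1 - δ) := h3.symm
      _ ≤ (δ / u x) ^ (1 - δ) := h2
  -- comparison: z ≤ ψ on [0, T]
  have hcomp : ∀ x ∈ Icc (0:ℝ) T, z x ≤ ψ x := by
    apply image_le_of_deriv_right_lt_deriv_boundary'
      (f := z) (f' := zd) (B := ψ) (B' := ψ')
    · exact fun x hx => ((hzderiv x hx.1).continuousAt).continuousWithinAt
    · exact fun x hx => (hzderiv x hx.1).hasDerivWithinAt
    · have : z 0 = 1 := by
        simp only [hz, hu]
        rw [mul_zero, zero_add, ← rpow_add hδ0]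
        simp
      rw [this, hψ0]
    · exact fun x hx => ((hderiv x hx.1).continuousAt).continuousWithinAt
    · exact fun x hx => (hderiv x hx.1).hasDerivWithinAt
    · intro x hx heq
      have hx0 : (0:ℝ) ≤ x := hx.1
      have hut0 := hut x hx0
      set w : ℝ := δ / u x with hw
      have hw0 : 0 < w := div_pos hδ0 hut0
      have hzw : z x = w ^ p := by
        simp only [hz, hw]
        rw [div_rpow hδ0.le hut0.le, rpow_neg hut0.le, div_eq_mul_inv]
      have hψx : ψ x = w ^ p := by rw [← heq, hzw]
      have hODEx := hODE x hx0
      rw [hψx] at hODEx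
      have hwp2γ : (w ^ p) ^ (2 * γ) = w ^ δ := by
        rw [← rpow_mul hw0.le]; congr 1; rw [hp]; field_simp
      have hwp2γδ : (w ^ p) ^ (2 * γ / δ) = w := by
        rw [← rpow_mul hw0.le, show δ / (2 * γ) * (2 * γ / δ) = 1 by field_simp, rpow_one]
      rw [hwp2γ, hwp2γδ] at hODEx
      -- zd x = -(2 * K) * w ^ (p + 1)
      have hzdx : zd x = -(2 * K) * w ^ (p + 1) := by
        have hwp1 : w ^ (p + 1) = δ ^ (p + 1) * u x ^ (-p - 1) := by
          rw [hw, div_rpow hδ0.le hut0.le, div_eq_mul_inv, ← rpow_neg hut0.le]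
          congr 1; ring
        have h4 : (4 : ℝ) * K * γ * (-p) = -(2 * K) * δ := by
          rw [hp]; field_simp; ring
        simp only [hzd]
        rw [hwp1, h4, rpow_add hδ0, rpow_one]
        ring
      -- the strict inequality
      have hsplit : w ^ (p + 1) = w ^ (p + δ) * w ^ (1 - δ) := by
        rw [← rpow_add hw0]; congr 1; ring
      have hpd : w ^ p * w ^ δ = w ^ (p + δ) := (rpow_add hw0 _ _).symm
      have hp1 : w ^ p * w = w ^ (p + 1) := by
        rw [rpow_add hw0, rpow_one]
      have hrhs : -K * w ^ p * (ε ^ (2 * γ) * w ^ δ + w)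
          = -(K * (ε ^ (2 * γ) * w ^ (p + δ))) - K * w ^ (p + 1) := by
        rw [← hpd, ← hp1]; ring
      have hstrict : ε ^ (2 * γ) * w ^ (p + δ) < w ^ (p + 1) := by
        rw [hsplit, mul_comm (w ^ (p + δ)) (w ^ (1 - δ))]
        exact mul_lt_mul_of_pos_right (hkey x hx0 hx.2.le) (rpow_pos_of_pos hw0 _)
      calc zd x = -(2 * K) * w ^ (p + 1) := hzdx
        _ < -(K * (ε ^ (2 * γ) * w ^ (p + δ))) - K * w ^ (p + 1) := by nlinarith [mul_lt_mul_of_pos_left hstrict hK]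
        _ = -K * w ^ p * (ε ^ (2 * γ) * w ^ δ + w) := hrhs.symm
        _ ≤ ψ' x := hODEx
  -- conclude
  have hfin := hcomp T ⟨hT0.le, le_refl T⟩
  have hutT := hut T hT0.le
  have hzT : z T = (δ / u T) ^ p := by
    simp only [hz]
    rw [div_rpow hδ0.le hutT.le, rpow_neg hutT.le, div_eq_mul_inv]
  have hlb : c ^ p * ε ^ (δ ^ 2 / (2 * γ)) ≤ z T := by
    rw [hzT]
    have h1 : (c * ε ^ δ) ^ p ≤ (δ / u T) ^ p :=
      rpow_le_rpow (by positivity) (hwlb T hT0.le le_rfl) hp0.le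
    have h2 : (c * ε ^ δ) ^ p = c ^ p * ε ^ (δ ^ 2 / (2 * γ)) := by
      rw [mul_rpow hc0.le hεδ.le, ← rpow_mul hε0.le]
      congr 1
      rw [hp]; field_simp
    rw [← h2]; exact h1
  exact le_trans hlb hfin
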